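/- A connected set joining the left and right sides of a closed axis-parallel rectangle separates the rectangle: if R = [a,b] × [c,d] and P ⊆ R is a compact connected set containing a point on {a} × [c,d] and a point on {b} × [c,d], then any compact connected set Q ⊆ R disjoint from P that contains a point of the top edge [a,b] × {d} and a point of the bottom edge [a,b] × {c} must be empty; i.e., no such Q exists. -/

import Mathlib

open Set

section CrossingAux

open Set Real

-- sin is negative on (π, 2π) shifted by 2πk
lemma sin_neg_of_mem (x : ℝ) (k : ℤ) (h1 : 2*π*k + π < x) (h2 : x < 2*π*k + 2*π) :
    Real.sin x < 0 := by
  have : Real.sin x = Real.sin (x - k * (2*π)) := (Real.sin_sub_int_mul_two_pi x k).symm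
  rw [this]
  have hx1 : π < x - k*(2*π) := by push_cast; linarith
  have hx2 : x - k*(2*π) < 2*π := by push_cast; linarith
  have := Real.sin_pos_of_pos_of_lt_pi (x := x - k*(2*π) - π) (by linarith) (by linarith)
  have hs := Real.sin_add_pi (x - k*(2*π) - π)
  rw [sub_add_cancel] at hs
  rw [hs]; linarith

/-- Trap lemma: a continuous function on `[0,1]` whose `sin` is nonneg stays in
`[2πk, 2πk+π]` once it is there. -/
lemma trap {f : ℝ → ℝ} (hf : ContinuousOn f (Icc 0 1))
    (hsin : ∀ t ∈ Icc (0:ℝ) 1, 0 ≤ Real.sin (f t)) {k : ℤ} {t₀ t₁ : ℝ}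
    (h₀ : t₀ ∈ Icc (0:ℝ) 1) (h₁ : t₁ ∈ Icc (0:ℝ) 1)
    (hm : f t₀ ∈ Icc (2*π*k) (2*π*k + π)) : f t₁ ∈ Icc (2*π*k) (2*π*k + π) := by
  have hπ := Real.pi_pos
  have huIcc : uIcc t₀ t₁ ⊆ Icc 0 1 := uIcc_subset_Icc h₀ h₁
  have hiv := intermediate_value_uIcc (hf.mono huIcc)
  constructor
  · by_contra hlt
    push_neg at hlt
    rcases lt_or_ge (2*π*k - π) (f t₁) with h2 | h2
    · have : Real.sin (f t₁) < 0 :=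
        sin_neg_of_mem _ (k-1) (by push_cast; linarith) (by push_cast; linarith)
      exact absurd (hsin t₁ h₁) (by linarith)
    · -- IVT to hit 2πk - π/2 where sin = -1
      have hc : 2*π*k - π/2 ∈ uIcc (f t₀) (f t₁) := by
        rw [mem_uIcc]; right; constructor <;> [linarith; linarith [hm.1]]
      obtain ⟨x, hx, hfx⟩ := hiv hc
      have : Real.sin (f x) < 0 := by
        rw [hfx]; exact sin_neg_of_mem _ (k-1) (by push_cast; linarith) (by push_cast; linarith)
      exact absurd (hsin x (huIcc hx)) (by linarith)
  · by_contra hgt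
    push_neg at hgt
    rcases lt_or_ge (f t₁) (2*π*k + 2*π) with h2 | h2
    · have : Real.sin (f t₁) < 0 := sin_neg_of_mem _ k (by linarith) (by linarith)
      exact absurd (hsin t₁ h₁) (by linarith)
    · have hc : 2*π*k + 3*π/2 ∈ uIcc (f t₀) (f t₁) := by
        rw [mem_uIcc]; left; constructor <;> [linarith [hm.2]; linarith]
      obtain ⟨x, hx, hfx⟩ := hiv hc
      have : Real.sin (f x) < 0 := by
        rw [hfx]; exact sin_neg_of_mem _ k (by linarith) (by linarith)
      exact absurd (hsin x (huIcc hx)) (by linarith)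

/-- Corner: `cos v ≤ 0` and `sin v ≥ 0` puts `v` in `[2πk+π/2, 2πk+π]` for some `k`. -/
lemma corner {v : ℝ} (h1 : Real.cos v ≤ 0) (h2 : 0 ≤ Real.sin v) :
    ∃ k : ℤ, v ∈ Icc (2*π*k + π/2) (2*π*k + π) := by
  have hπ := Real.pi_pos
  have h2π : (0:ℝ) < 2*π := by linarith
  refine ⟨⌊v / (2*π)⌋, ?_⟩
  set k : ℤ := ⌊v / (2*π)⌋ with hk
  have hw0 : (k:ℝ) * (2*π) ≤ v := by
    rw [← le_div_iff₀ h2π]; exact Int.floor_le _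
  have hw2 : v < (k:ℝ) * (2*π) + 2*π := by
    have := Int.lt_floor_add_one (v / (2*π))
    rw [div_lt_iff₀ h2π] at this; push_cast at this; linarith
  have hcos : Real.cos (v - k * (2*π)) ≤ 0 := by rw [Real.cos_sub_int_mul_two_pi]; exact h1
  have hsin : 0 ≤ Real.sin (v - k * (2*π)) := by rw [Real.sin_sub_int_mul_two_pi]; exact h2
  have hle : v - k * (2*π) ≤ π := by
    by_contra hgt
    push_neg at hgt
    have : Real.sin (v - k * (2*π)) < 0 :=
      sin_neg_of_mem _ 0 (by push_cast; linarith) (by push_cast; linarith)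
    linarith
  have hge : π/2 ≤ v - k * (2*π) := by
    by_contra hlt
    push_neg at hlt
    have : 0 < Real.cos (v - k * (2*π)) :=
      Real.cos_pos_of_mem_Ioo ⟨by linarith, hlt⟩
    linarith
  constructor <;> [linarith; linarith]

end CrossingAux

section CrossingAux2

open Set Real Finset

noncomputable def unitc (z : ℂ) : ℂ := z / (‖z‖ : ℂ)

lemma unitc_ne_zero {z : ℂ} (hz : z ≠ 0) : unitc z ≠ 0 := by
  simp [unitc, hz, norm_ne_zero_iff.mpr hz]

lemma exp_arg_eq {z : ℂ} (hz : z ≠ 0) : Complex.exp (z.arg * Complex.I) = unitc z := by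
  have := Complex.norm_mul_exp_arg_mul_I z
  rw [unitc, eq_div_iff (by exact_mod_cast norm_ne_zero_iff.mpr hz), mul_comm]
  exact this

lemma unitc_div {z w : ℂ} : unitc (z / w) = unitc z / unitc w := by
  rcases eq_or_ne w 0 with rfl | hw
  · simp [unitc]
  rcases eq_or_ne z 0 with rfl | hz
  · simp [unitc]
  simp only [unitc, norm_div]
  push_cast
  field_simp

lemma exp_telescope (f : ℕ → ℂ) (n : ℕ) (hf : ∀ j, j ≤ n → f j ≠ 0) :
    Complex.exp ((∑ j ∈ Finset.range n, (f (j+1) / f j).arg : ℝ) * Complex.I) * unitc (f 0)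
      = unitc (f n) := by
  induction n with
  | zero => simp [exp_arg_eq (hf 0 le_rfl)]
  | succ n ih =>
    have hfn : f n ≠ 0 := hf n (Nat.le_succ n)
    have hfn1 : f (n+1) ≠ 0 := hf (n+1) le_rfl
    rw [Finset.sum_range_succ, Complex.ofReal_add, add_mul, Complex.exp_add,
      exp_arg_eq (div_ne_zero hfn1 hfn), unitc_div]
    rw [mul_comm (Complex.exp _), mul_assoc, ih (fun j hj => hf j (Nat.le_succ_of_le hj))]
    field_simp [unitc_ne_zero hfn]

end CrossingAux2

section CrossingCore

open Set Real Finset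

lemma re_pos_of_close {z : ℂ} (hz : ‖z - 1‖ < 1) : 0 < z.re := by
  have h1 := Complex.abs_re_le_norm (z - 1)
  have : |z.re - 1| < 1 := by
    simpa using lt_of_le_of_lt h1 hz
  have := abs_lt.mp this
  linarith [this.1]

theorem no_crossing_h (h : ℝ × ℝ → ℂ)
    (hcont : ContinuousOn h (Icc (0:ℝ) 1 ×ˢ Icc (0:ℝ) 1))
    (hne : ∀ p ∈ (Icc (0:ℝ) 1 ×ˢ Icc (0:ℝ) 1), h p ≠ 0)
    (hleft : ∀ t ∈ Icc (0:ℝ) 1, (h (0, t)).re ≤ 0)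
    (hright : ∀ t ∈ Icc (0:ℝ) 1, 0 ≤ (h (1, t)).re)
    (hbot : ∀ s ∈ Icc (0:ℝ) 1, 0 ≤ (h (s, 0)).im)
    (htop : ∀ s ∈ Icc (0:ℝ) 1, (h (s, 1)).im ≤ 0) : False := by
  have hπ := Real.pi_pos
  set K : Set (ℝ × ℝ) := Icc (0:ℝ) 1 ×ˢ Icc (0:ℝ) 1 with hKdef
  have hK : IsCompact K := isCompact_Icc.prod isCompact_Icc
  have h00K : ((0:ℝ), (0:ℝ)) ∈ K := by
    simp [hKdef, Set.mem_prod, Set.mem_Icc, zero_le_one]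
  -- minimum modulus
  obtain ⟨pm, hpmK, hpm⟩ := hK.exists_isMinOn ⟨_, h00K⟩
    (continuous_norm.comp_continuousOn hcont)
  set m : ℝ := ‖h pm‖ with hmdef
  have hm : 0 < m := by
    have := hne pm hpmK
    exact norm_pos_iff.mpr this
  have hmle : ∀ p ∈ K, m ≤ ‖h p‖ := fun p hp => hpm hp
  -- uniform continuity
  have huc := hK.uniformContinuousOn_of_continuous hcont
  rw [Metric.uniformContinuousOn_iff] at huc
  obtain ⟨δ, hδ, hδ'⟩ := huc m hm
  obtain ⟨n, hn⟩ := exists_nat_one_div_lt hδ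
  set N : ℕ := n + 1 with hNdef
  have hN : (0:ℝ) < N := by positivity
  have hNδ : 1 / (N:ℝ) < δ := by exact_mod_cast hn
  -- ratio facts
  have ratio : ∀ p ∈ K, ∀ q ∈ K, dist p q < δ → 0 < (h q / h p).re := by
    intro p hp q hq hpq
    apply re_pos_of_close
    have hhp := hne p hp
    have : h q / h p - 1 = (h q - h p) / h p := by
      field_simp
    rw [this, norm_div]
    rw [div_lt_one (norm_pos_iff.mpr hhp)]
    calc ‖h q - h p‖ = dist (h q) (h p) := by rw [Complex.dist_eq]
    _ < m := hδ' q hq p hp (by rwa [dist_comm])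
    _ ≤ ‖h p‖ := hmle p hp
  -- the grid
  set u : ℕ → ℝ → ℝ := fun j x => min x (j / N) with hudef
  have hu_mem : ∀ x ∈ Icc (0:ℝ) 1, ∀ j : ℕ, u j x ∈ Icc (0:ℝ) 1 := by
    intro x hx j
    constructor
    · exact le_min hx.1 (by positivity)
    · exact le_trans (min_le_left _ _) hx.2
  have hu0 : ∀ x ∈ Icc (0:ℝ) 1, u 0 x = 0 := by
    intro x hx; simp [hudef, hx.1]
  have huN : ∀ x ∈ Icc (0:ℝ) 1, u N x = x := by
    intro x hx
    simp only [hudef]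
    rw [div_self (ne_of_gt hN)]
    exact min_eq_left hx.2
  have humono : ∀ x : ℝ, ∀ j : ℕ, u j x ≤ u (j+1) x := by
    intro x j
    exact min_le_min le_rfl (by gcongr <;> push_cast <;> linarith)
  have hNinv : (0:ℝ) < 1 / N := by positivity
  have hclose : ∀ x : ℝ, ∀ j : ℕ, dist (u (j+1) x) (u j x) < δ := by
    intro x j
    rw [Real.dist_eq, abs_of_nonneg (sub_nonneg.mpr (humono x j))]
    simp only [hudef]
    rcases le_or_gt x ((j:ℝ)/N) with hc | hc
    · rw [min_eq_left hc, min_eq_left (hc.trans (by gcongr <;> push_cast <;> linarith))]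
      linarith
    · rw [min_eq_right hc.le]
      have h1 : min x (((j+1:ℕ):ℝ)/N) ≤ ((j+1:ℕ):ℝ)/N := min_le_right _ _
      have h2 : ((j+1:ℕ):ℝ)/N - (j:ℝ)/N = 1/N := by push_cast; ring
      linarith
  -- grid points lie in K
  have hgrid1 : ∀ p ∈ K, ∀ j : ℕ, ((u j p.1, (0:ℝ)) : ℝ × ℝ) ∈ K := by
    intro p hp j
    exact ⟨hu_mem p.1 hp.1 j, by simp [zero_le_one]⟩
  have hgrid2 : ∀ p ∈ K, ∀ j : ℕ, ((p.1, u j p.2) : ℝ × ℝ) ∈ K := by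
    intro p hp j
    exact ⟨hp.1, hu_mem p.2 hp.2 j⟩
  -- the angle function
  set θ : ℝ × ℝ → ℝ := fun p => (h (0,0)).arg
      + ∑ j ∈ Finset.range N, (h (u (j+1) p.1, 0) / h (u j p.1, 0)).arg
      + ∑ j ∈ Finset.range N, (h (p.1, u (j+1) p.2) / h (p.1, u j p.2)).arg with hθdef
  -- key identity
  have key : ∀ p ∈ K, Complex.exp (θ p * Complex.I) = unitc (h p) := by
    intro p hp
    have hp1 : p.1 ∈ Icc (0:ℝ) 1 := hp.1
    have hp2 : p.2 ∈ Icc (0:ℝ) 1 := hp.2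
    have t1 := exp_telescope (fun j => h (u j p.1, 0)) N
      (fun j _ => hne _ (hgrid1 p hp j))
    have t2 := exp_telescope (fun j => h (p.1, u j p.2)) N
      (fun j _ => hne _ (hgrid2 p hp j))
    simp only [hu0 p.1 hp1, huN p.1 hp1, hu0 p.2 hp2, huN p.2 hp2] at t1 t2
    have hq0 : unitc (h (0, 0)) ≠ 0 := unitc_ne_zero (hne _ h00K)
    have hq1 : unitc (h (p.1, 0)) ≠ 0 := unitc_ne_zero (hne _ (by exact ⟨hp1, by simp [zero_le_one]⟩))
    rw [hθdef]
    simp only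
    rw [Complex.ofReal_add, Complex.ofReal_add, add_mul, add_mul, Complex.exp_add,
      Complex.exp_add, exp_arg_eq (hne _ h00K)]
    have hpeta : (p.1, p.2) = p := rfl
    rw [hpeta] at t2
    rw [mul_assoc]
    calc unitc (h (0,0)) * (Complex.exp _ * Complex.exp _)
        = (Complex.exp ((∑ j ∈ Finset.range N, (h (u (j+1) p.1, 0) / h (u j p.1, 0)).arg : ℝ) * Complex.I) * unitc (h (0,0))) * Complex.exp ((∑ j ∈ Finset.range N, (h (p.1, u (j+1) p.2) / h (p.1, u j p.2)).arg : ℝ) * Complex.I) := by ring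
      _ = unitc (h (p.1, 0)) * Complex.exp ((∑ j ∈ Finset.range N, (h (p.1, u (j+1) p.2) / h (p.1, u j p.2)).arg : ℝ) * Complex.I) := by rw [t1]
      _ = Complex.exp ((∑ j ∈ Finset.range N, (h (p.1, u (j+1) p.2) / h (p.1, u j p.2)).arg : ℝ) * Complex.I) * unitc (h (p.1, 0)) := by ring
      _ = unitc (h p) := t2
  -- sign equivalences
  have hcos : ∀ p ∈ K, Real.cos (θ p) = (h p).re / ‖h p‖ := by
    intro p hp
    have := congrArg Complex.re (key p hp)
    rwa [Complex.exp_ofReal_mul_I_re, unitc, Complex.div_ofReal_re] at this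
  have hsin : ∀ p ∈ K, Real.sin (θ p) = (h p).im / ‖h p‖ := by
    intro p hp
    have := congrArg Complex.im (key p hp)
    rwa [Complex.exp_ofReal_mul_I_im, unitc, Complex.div_ofReal_im] at this
  -- continuity of θ on K
  have hucont : ∀ j : ℕ, Continuous (fun x : ℝ => u j x) :=
    fun j => continuous_id.min continuous_const
  have hθcont : ContinuousOn θ K := by
    apply ContinuousOn.add
    apply ContinuousOn.add continuousOn_const
    · apply continuousOn_finset_sum
      intro j _
      have hmap1 : MapsTo (fun p : ℝ × ℝ => ((u (j+1) p.1, (0:ℝ)) : ℝ × ℝ)) K K :=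
        fun p hp => hgrid1 p hp (j+1)
      have hmap2 : MapsTo (fun p : ℝ × ℝ => ((u j p.1, (0:ℝ)) : ℝ × ℝ)) K K :=
        fun p hp => hgrid1 p hp j
      have hnum : ContinuousOn (fun p : ℝ × ℝ => h (u (j+1) p.1, 0)) K :=
        hcont.comp (((hucont (j+1)).comp continuous_fst).prodMk continuous_const).continuousOn hmap1
      have hden : ContinuousOn (fun p : ℝ × ℝ => h (u j p.1, 0)) K :=
        hcont.comp (((hucont j).comp continuous_fst).prodMk continuous_const).continuousOn hmap2
      have hratio : ContinuousOn (fun p : ℝ × ℝ => h (u (j+1) p.1, 0) / h (u j p.1, 0)) K :=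
        hnum.div hden (fun p hp => hne _ (hgrid1 p hp j))
      intro p hp
      have hmem : (h (u (j+1) p.1, 0) / h (u j p.1, 0)) ∈ Complex.slitPlane := by
        apply Complex.mem_slitPlane_iff.mpr
        left
        exact ratio _ (hgrid1 p hp j) _ (hgrid1 p hp (j+1)) (by
          rw [Prod.dist_eq]
          simp only [dist_self]
          rw [max_eq_left dist_nonneg, dist_comm]
          exact hclose p.1 j)
      show ContinuousWithinAt (Complex.arg ∘ fun p : ℝ × ℝ => h (u (j+1) p.1, 0) / h (u j p.1, 0)) K p
      exact ContinuousAt.comp_continuousWithinAt (Complex.continuousAt_arg hmem) (hratio p hp)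
    · apply continuousOn_finset_sum
      intro j _
      have hnum : ContinuousOn (fun p : ℝ × ℝ => h (p.1, u (j+1) p.2)) K :=
        hcont.comp (continuous_fst.prodMk ((hucont (j+1)).comp continuous_snd)).continuousOn
          (fun p hp => hgrid2 p hp (j+1))
      have hden : ContinuousOn (fun p : ℝ × ℝ => h (p.1, u j p.2)) K :=
        hcont.comp (continuous_fst.prodMk ((hucont j).comp continuous_snd)).continuousOn
          (fun p hp => hgrid2 p hp j)
      have hratio : ContinuousOn (fun p : ℝ × ℝ => h (p.1, u (j+1) p.2) / h (p.1, u j p.2)) K :=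
        hnum.div hden (fun p hp => hne _ (hgrid2 p hp j))
      intro p hp
      have hmem : (h (p.1, u (j+1) p.2) / h (p.1, u j p.2)) ∈ Complex.slitPlane := by
        apply Complex.mem_slitPlane_iff.mpr
        left
        exact ratio _ (hgrid2 p hp j) _ (hgrid2 p hp (j+1)) (by
          rw [Prod.dist_eq]
          simp only [dist_self]
          rw [max_eq_right dist_nonneg, dist_comm]
          exact hclose p.2 j)
      show ContinuousWithinAt (Complex.arg ∘ fun p : ℝ × ℝ => h (p.1, u (j+1) p.2) / h (p.1, u j p.2)) K p
      exact ContinuousAt.comp_continuousWithinAt (Complex.continuousAt_arg hmem) (hratio p hp)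
  -- edge memberships and sign facts
  have h0m : (0:ℝ) ∈ Icc (0:ℝ) 1 := ⟨le_rfl, zero_le_one⟩
  have h1m : (1:ℝ) ∈ Icc (0:ℝ) 1 := ⟨zero_le_one, le_rfl⟩
  have hmemB : ∀ s ∈ Icc (0:ℝ) 1, ((s,(0:ℝ)) : ℝ × ℝ) ∈ K := fun s hs => ⟨hs, h0m⟩
  have hmemT : ∀ s ∈ Icc (0:ℝ) 1, ((s,(1:ℝ)) : ℝ × ℝ) ∈ K := fun s hs => ⟨hs, h1m⟩
  have hmemL : ∀ t ∈ Icc (0:ℝ) 1, (((0:ℝ),t) : ℝ × ℝ) ∈ K := fun t ht => ⟨h0m, ht⟩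
  have hmemR : ∀ t ∈ Icc (0:ℝ) 1, (((1:ℝ),t) : ℝ × ℝ) ∈ K := fun t ht => ⟨h1m, ht⟩
  have sinB : ∀ s ∈ Icc (0:ℝ) 1, 0 ≤ Real.sin (θ (s, 0)) := by
    intro s hs; rw [hsin _ (hmemB s hs)]
    exact div_nonneg (hbot s hs) (norm_nonneg _)
  have sinT : ∀ s ∈ Icc (0:ℝ) 1, Real.sin (θ (s, 1)) ≤ 0 := by
    intro s hs; rw [hsin _ (hmemT s hs)]
    exact div_nonpos_of_nonpos_of_nonneg (htop s hs) (norm_nonneg _)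
  have cosL : ∀ t ∈ Icc (0:ℝ) 1, Real.cos (θ (0, t)) ≤ 0 := by
    intro t ht; rw [hcos _ (hmemL t ht)]
    exact div_nonpos_of_nonpos_of_nonneg (hleft t ht) (norm_nonneg _)
  have cosR : ∀ t ∈ Icc (0:ℝ) 1, 0 ≤ Real.cos (θ (1, t)) := by
    intro t ht; rw [hcos _ (hmemR t ht)]
    exact div_nonneg (hright t ht) (norm_nonneg _)
  -- normalize by the angle at the corner (0,0)
  obtain ⟨k, hk⟩ := corner (cosL 0 h0m) (sinB 0 h0m)
  set φ : ℝ × ℝ → ℝ := fun p => θ p - k * (2*π) with hφdef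
  have cosφ : ∀ p, Real.cos (φ p) = Real.cos (θ p) := fun p => Real.cos_sub_int_mul_two_pi _ k
  have sinφ : ∀ p, Real.sin (φ p) = Real.sin (θ p) := fun p => Real.sin_sub_int_mul_two_pi _ k
  have hφcont : ContinuousOn φ K := hθcont.sub continuousOn_const
  have hφ00 : φ (0,0) ∈ Icc (π/2) π := by
    constructor
    · have := hk.1; simp only [hφdef]; linarith
    · have := hk.2; simp only [hφdef]; linarith
  have sinφB : ∀ t ∈ Icc (0:ℝ) 1, 0 ≤ Real.sin (φ (t, 0)) := by
    intro t ht
    simp only [hφdef]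
    rw [Real.sin_sub_int_mul_two_pi]
    exact sinB t ht
  clear_value φ
  -- bottom edge
  have hBcont : ContinuousOn (fun s : ℝ => φ (s, 0)) (Icc 0 1) := by
    show ContinuousOn (φ ∘ fun s : ℝ => ((s,(0:ℝ)) : ℝ × ℝ)) (Icc 0 1)
    exact hφcont.comp (continuous_id.prodMk continuous_const).continuousOn hmemB
  have hB : φ (1, 0) ∈ Icc (2*π*((0:ℤ):ℝ)) (2*π*((0:ℤ):ℝ) + π) := by
    refine trap hBcont ?_ h0m h1m (t₀ := 0) ?_
    · exact sinφB
    · constructor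
      · show (2*π*((0:ℤ):ℝ)) ≤ φ (0, 0)
        push_cast; linarith [hφ00.1]
      · show φ (0, 0) ≤ 2*π*((0:ℤ):ℝ) + π
        push_cast; linarith [hφ00.2]
  rw [Int.cast_zero] at hB
  have hB1 : φ (1,0) ∈ Icc 0 π := by
    constructor
    · have := hB.1; linarith
    · have := hB.2; linarith
  have hB2 : φ (1,0) ≤ π/2 := by
    by_contra hgt
    push_neg at hgt
    have hlt : Real.cos (φ (1,0)) < 0 :=
      Real.cos_neg_of_pi_div_two_lt_of_lt hgt (by linarith [hB1.2])
    rw [cosφ] at hlt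
    exact absurd (cosR 0 h0m) (by linarith)
  -- right edge
  have hRcont : ContinuousOn (fun t : ℝ => φ (1, t) + π/2) (Icc 0 1) := by
    apply ContinuousOn.add _ continuousOn_const
    show ContinuousOn (φ ∘ fun t : ℝ => (((1:ℝ),t) : ℝ × ℝ)) (Icc 0 1)
    exact hφcont.comp (continuous_const.prodMk continuous_id).continuousOn hmemR
  have hR : φ (1, 1) + π/2 ∈ Icc (2*π*((0:ℤ):ℝ)) (2*π*((0:ℤ):ℝ) + π) := by
    refine trap hRcont ?_ h0m h1m (t₀ := 0) ?_
    · intro t ht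
      show 0 ≤ Real.sin (φ (1, t) + π/2)
      rw [Real.sin_add_pi_div_two, cosφ]
      exact cosR t ht
    · constructor
      · show (2*π*((0:ℤ):ℝ)) ≤ φ (1, 0) + π/2
        push_cast; linarith [hB1.1]
      · show φ (1, 0) + π/2 ≤ 2*π*((0:ℤ):ℝ) + π
        push_cast; linarith [hB2]
  rw [Int.cast_zero] at hR
  have hR1 : φ (1,1) ∈ Icc (-(π/2)) (π/2) := by
    constructor
    · have := hR.1; linarith
    · have := hR.2; linarith
  have hR2 : φ (1,1) ≤ 0 := by
    by_contra hgt
    push_neg at hgt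
    have hlt : 0 < Real.sin (φ (1,1)) :=
      Real.sin_pos_of_pos_of_lt_pi hgt (by linarith [hR1.2])
    rw [sinφ] at hlt
    exact absurd (sinT 1 h1m) (by linarith)
  -- top edge (backwards)
  have hTcont : ContinuousOn (fun s : ℝ => -φ (s, 1)) (Icc 0 1) := by
    apply ContinuousOn.neg
    show ContinuousOn (φ ∘ fun s : ℝ => ((s,(1:ℝ)) : ℝ × ℝ)) (Icc 0 1)
    exact hφcont.comp (continuous_id.prodMk continuous_const).continuousOn hmemT
  have hT : -φ (0, 1) ∈ Icc (2*π*((0:ℤ):ℝ)) (2*π*((0:ℤ):ℝ) + π) := by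
    refine trap hTcont ?_ h1m h0m (t₀ := 1) ?_
    · intro s hs
      show 0 ≤ Real.sin (-φ (s, 1))
      rw [Real.sin_neg, sinφ]
      linarith [sinT s hs]
    · constructor
      · show (2*π*((0:ℤ):ℝ)) ≤ -φ (1, 1)
        push_cast; linarith [hR2]
      · show -φ (1, 1) ≤ 2*π*((0:ℤ):ℝ) + π
        push_cast; linarith [hR1.1]
  rw [Int.cast_zero] at hT
  have hT1 : φ (0,1) ∈ Icc (-π) 0 := by
    constructor
    · have := hT.2; linarith
    · have := hT.1; linarith
  have hT2 : φ (0,1) ≤ -(π/2) := by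
    by_contra hgt
    push_neg at hgt
    have hlt : 0 < Real.cos (φ (0,1)) :=
      Real.cos_pos_of_mem_Ioo ⟨by linarith, by linarith [hT1.2]⟩
    rw [cosφ] at hlt
    exact absurd (cosL 1 h1m) (by linarith)
  -- left edge (backwards): contradiction
  have hLcont : ContinuousOn (fun t : ℝ => φ (0, t) - π/2) (Icc 0 1) := by
    apply ContinuousOn.sub _ continuousOn_const
    show ContinuousOn (φ ∘ fun t : ℝ => (((0:ℝ),t) : ℝ × ℝ)) (Icc 0 1)
    exact hφcont.comp (continuous_const.prodMk continuous_id).continuousOn hmemL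
  have hL : φ (0, 0) - π/2 ∈ Icc (2*π*((-1:ℤ):ℝ)) (2*π*((-1:ℤ):ℝ) + π) := by
    refine trap hLcont ?_ h1m h0m (t₀ := 1) ?_
    · intro t ht
      show 0 ≤ Real.sin (φ (0, t) - π/2)
      rw [Real.sin_sub_pi_div_two, cosφ]
      linarith [cosL t ht]
    · constructor
      · show (2*π*((-1:ℤ):ℝ)) ≤ φ (0, 1) - π/2
        push_cast; linarith [hT1.1]
      · show φ (0, 1) - π/2 ≤ 2*π*((-1:ℤ):ℝ) + π
        push_cast; linarith [hT2]
  have : φ (0,0) ≤ -(π/2) := by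
    have := hL.2; push_cast at this; linarith
  linarith [hφ00.1]

end CrossingCore

section CrossingRed

open Set Metric

/-- A convex subset of the plane is locally path-connected. -/
lemma Convex.locPathConnectedSpace' {S : Set (ℝ × ℝ)} (hS : Convex ℝ S) :
    LocallyPathConnectedSpace S := by
  refine LocallyPathConnectedSpace.of_bases (p := fun (x : S) (r : ℝ) => 0 < r)
    (s := fun x r => Subtype.val ⁻¹' Metric.ball x.1 r) (fun x => ?_) (fun x r hr => ?_)
  · rw [nhds_subtype]
    exact Metric.nhds_basis_ball.comap _
  · rw [Topology.IsInducing.subtypeVal.isPathConnected_iff, Subtype.image_preimage_coe]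
    exact (hS.inter (convex_ball _ _)).isPathConnected ⟨x.1, x.2, mem_ball_self hr⟩

/-- An open set intersected with a convex set, if connected, is path-connected. -/
lemma open_inter_convex_pathConnected {U S : Set (ℝ × ℝ)} (hU : IsOpen U) (hS : Convex ℝ S)
    (hconn : IsConnected (U ∩ S)) : IsPathConnected (U ∩ S) := by
  haveI := hS.locPathConnectedSpace'
  set V : Set S := Subtype.val ⁻¹' U with hVdef
  have hVopen : IsOpen V := hU.preimage continuous_subtype_val
  have himg : Subtype.val '' V = U ∩ S := by
    rw [hVdef, Subtype.image_preimage_coe, inter_comm]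
  have hVconn : IsConnected V := by
    constructor
    · obtain ⟨x, hx⟩ := hconn.nonempty
      exact ⟨⟨x, hx.2⟩, hx.1⟩
    · rw [← Topology.IsInducing.subtypeVal.isPreconnected_image (s := V)]  -- maybe direction
      rw [himg]
      exact hconn.isPreconnected
  have := (hVopen.isConnected_iff_isPathConnected).1 hVconn
  have h2 := this.image (f := (Subtype.val : S → ℝ × ℝ)) continuous_subtype_val
  rwa [himg] at h2

/-- The thickening of a connected set intersected with a convex superset is connected. -/
lemma thick_inter_convex_connected {P S : Set (ℝ × ℝ)} (hP : IsConnected P) (hPS : P ⊆ S)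
    (hS : Convex ℝ S) {ε : ℝ} (hε : 0 < ε) :
    IsConnected (Metric.thickening ε P ∩ S) := by
  obtain ⟨p₀, hp₀⟩ := hP.nonempty
  have heq : Metric.thickening ε P ∩ S = ⋃₀ ((fun p => (Metric.ball p ε ∩ S) ∪ P) '' P) := by
    ext x
    constructor
    · rintro ⟨hx1, hx2⟩
      rw [Metric.thickening_eq_biUnion_ball] at hx1
      obtain ⟨p, hpP, hxp⟩ := mem_iUnion₂.mp hx1
      exact ⟨_, mem_image_of_mem _ hpP, Or.inl ⟨hxp, hx2⟩⟩
    · rintro ⟨_, ⟨p, hpP, rfl⟩, hx⟩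
      rcases hx with ⟨hx1, hx2⟩ | hxP
      · refine ⟨?_, hx2⟩
        rw [Metric.thickening_eq_biUnion_ball]
        exact mem_iUnion₂.mpr ⟨p, hpP, hx1⟩
      · exact ⟨Metric.self_subset_thickening hε P hxP, hPS hxP⟩
  constructor
  · exact ⟨p₀, Metric.self_subset_thickening hε P hp₀, hPS hp₀⟩
  · rw [heq]
    apply isPreconnected_sUnion p₀
    · rintro _ ⟨p, hpP, rfl⟩
      exact Or.inr hp₀
    · rintro _ ⟨p, hpP, rfl⟩
      exact IsPreconnected.union p ⟨mem_ball_self hε, hPS hpP⟩ hpP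
        ((convex_ball p ε).inter hS).isPreconnected hP.isPreconnected

end CrossingRed

section CrossingMain

open Set Metric

/-- Crossing paths in a rectangle must meet: if a compact connected subset `P` of the
closed rectangle `R = [a,b] × [c,d]` joins the left and right edges, then there is no
compact connected subset `Q` of `R`, disjoint from `P`, joining the top and bottom
edges. -/
theorem rectangle_crossing_paths_meet
    (a b c d : ℝ) (hab : a < b) (hcd : c < d)
    (R : Set (ℝ × ℝ)) (hR : R = Set.Icc a b ×ˢ Set.Icc c d)
    (P Q : Set (ℝ × ℝ))
    (hPR : P ⊆ R) (hPcomp : IsCompact P) (hPconn : IsConnected P)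
    (hPleft : (P ∩ {a} ×ˢ Set.Icc c d).Nonempty)
    (hPright : (P ∩ {b} ×ˢ Set.Icc c d).Nonempty)
    (hQR : Q ⊆ R) (hQcomp : IsCompact Q) (hQconn : IsConnected Q)
    (hQtop : (Q ∩ Set.Icc a b ×ˢ {d}).Nonempty)
    (hQbot : (Q ∩ Set.Icc a b ×ˢ {c}).Nonempty)
    (hdisj : Disjoint P Q) :
    False := by
  obtain ⟨ε, hε, hdisj2⟩ := hdisj.exists_thickenings hPcomp hQcomp.isClosed
  have hRconv : Convex ℝ R := hR ▸ (convex_Icc a b).prod (convex_Icc c d)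
  -- paths inside thickenings
  have hUpath : IsPathConnected (Metric.thickening ε P ∩ R) :=
    open_inter_convex_pathConnected isOpen_thickening hRconv
      (thick_inter_convex_connected hPconn hPR hRconv hε)
  have hVpath : IsPathConnected (Metric.thickening ε Q ∩ R) :=
    open_inter_convex_pathConnected isOpen_thickening hRconv
      (thick_inter_convex_connected hQconn hQR hRconv hε)
  obtain ⟨p₀, hp₀P, hp₀e⟩ := hPleft
  obtain ⟨p₁, hp₁P, hp₁e⟩ := hPright
  obtain ⟨q₀, hq₀Q, hq₀e⟩ := hQbot
  obtain ⟨q₁, hq₁Q, hq₁e⟩ := hQtop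
  have hp₀x : p₀.1 = a := (mem_prod.mp hp₀e).1
  have hp₁x : p₁.1 = b := (mem_prod.mp hp₁e).1
  have hq₀y : q₀.2 = c := (mem_prod.mp hq₀e).2
  have hq₁y : q₁.2 = d := (mem_prod.mp hq₁e).2
  have hPU : P ⊆ Metric.thickening ε P ∩ R :=
    subset_inter (Metric.self_subset_thickening hε P) hPR
  have hQV : Q ⊆ Metric.thickening ε Q ∩ R :=
    subset_inter (Metric.self_subset_thickening hε Q) hQR
  obtain ⟨γ, hγ⟩ := hUpath.joinedIn p₀ (hPU hp₀P) p₁ (hPU hp₁P)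
  obtain ⟨σ, hσ⟩ := hVpath.joinedIn q₀ (hQV hq₀Q) q₁ (hQV hq₁Q)
  have hγmem : ∀ s : ℝ, γ.extend s ∈ Metric.thickening ε P ∩ R := by
    intro s
    have : γ.extend s ∈ range γ.extend := mem_range_self s
    rw [Path.extend_range] at this
    obtain ⟨t, ht⟩ := this
    exact ht ▸ hγ t
  have hσmem : ∀ t : ℝ, σ.extend t ∈ Metric.thickening ε Q ∩ R := by
    intro t
    have : σ.extend t ∈ range σ.extend := mem_range_self t
    rw [Path.extend_range] at this
    obtain ⟨u, hu⟩ := this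
    exact hu ▸ hσ u
  -- rectangle coordinates
  have hγR : ∀ s : ℝ, (γ.extend s).1 ∈ Icc a b ∧ (γ.extend s).2 ∈ Icc c d := by
    intro s
    have := (hγmem s).2
    rw [hR] at this
    exact mem_prod.mp this
  have hσR : ∀ t : ℝ, (σ.extend t).1 ∈ Icc a b ∧ (σ.extend t).2 ∈ Icc c d := by
    intro t
    have := (hσmem t).2
    rw [hR] at this
    exact mem_prod.mp this
  -- the complex difference function
  set h : ℝ × ℝ → ℂ := fun st =>
    (((γ.extend st.1).1 - (σ.extend st.2).1 : ℝ) : ℂ)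
      + (((γ.extend st.1).2 - (σ.extend st.2).2 : ℝ) : ℂ) * Complex.I with hhdef
  have hre : ∀ st : ℝ × ℝ, (h st).re = (γ.extend st.1).1 - (σ.extend st.2).1 := by
    intro st; simp [hhdef]
  have him : ∀ st : ℝ × ℝ, (h st).im = (γ.extend st.1).2 - (σ.extend st.2).2 := by
    intro st; simp [hhdef]
  have hcont : Continuous h := by
    apply Continuous.add
    · exact Complex.continuous_ofReal.comp
        (((continuous_fst.comp γ.continuous_extend).comp continuous_fst).sub
          ((continuous_fst.comp σ.continuous_extend).comp continuous_snd))
    · exact (Complex.continuous_ofReal.comp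
        (((continuous_snd.comp γ.continuous_extend).comp continuous_fst).sub
          ((continuous_snd.comp σ.continuous_extend).comp continuous_snd))).mul continuous_const
  apply no_crossing_h h hcont.continuousOn
  · -- nonvanishing
    intro p _ hzero
    have h1 : (γ.extend p.1).1 = (σ.extend p.2).1 := by
      have := congrArg Complex.re hzero
      rw [hre] at this
      simpa using sub_eq_zero.mp (by simpa using this)
    have h2 : (γ.extend p.1).2 = (σ.extend p.2).2 := by
      have := congrArg Complex.im hzero
      rw [him] at this
      simpa using sub_eq_zero.mp (by simpa using this)
    have heq : γ.extend p.1 = σ.extend p.2 := Prod.ext h1 h2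
    have hmem1 := (hγmem p.1).1
    have hmem2 := (hσmem p.2).1
    rw [heq] at hmem1
    exact (Set.disjoint_left.mp hdisj2) hmem1 hmem2
  · -- left edge
    intro t _
    rw [hre]
    simp only [Path.extend_zero, γ.source]  -- γ.extend 0 = p₀
    have := (hσR t).1.1
    rw [hp₀x]
    linarith
  · -- right edge
    intro t _
    rw [hre]
    simp only [Path.extend_one, γ.target]
    have := (hσR t).1.2
    rw [hp₁x]
    linarith
  · -- bottom edge
    intro s _
    rw [him]
    simp only [Path.extend_zero, σ.source]
    have := (hγR s).2.1
    rw [hq₀y]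
    linarith
  · -- top edge
    intro s _
    rw [him]
    simp only [Path.extend_one, σ.target]
    have := (hγR s).2.2
    rw [hq₁y]
    linarith

end CrossingMain
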